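/- Let (G,m,w,B) be a connected weighted finite graph with boundary, and let T : ℝ^Ω → ℝ^Ω be the nonnegative self-adjoint operator (Tu)(z) = (1/m_z)∑_{x∈B} w_{xz}·(∑_{y∈Ω} u(y)w_{xy})/(∑_{y∈Ω} w_{xy}), with eigenvalues s₁² ≤ s₂² ≤ ⋯ ≤ s_{|Ω|}². Then for every i = 1, 2, …, |Ω|: ν_i + s₁² ≤ λ_i ≤ ν_i + s_{|Ω|}². -/

import Mathlib

open Finset

noncomputable section

/-- The weighted graph Laplacian `Δ`. -/
def glap {V : Type*} [Fintype V] (m : V → ℝ) (w : V → V → ℝ) (u : V → ℝ) (x : V) : ℝ :=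
  (1 / m x) * ∑ y, (u y - u x) * w x y

/-- Extension by zero to the boundary. -/
def E0 {V : Type*} [DecidableEq V] (B : Finset V) (u : {x : V // x ∉ B} → ℝ) (x : V) : ℝ :=
  if h : x ∈ B then 0 else u ⟨x, h⟩

/-- The normal extension. -/
def N0 {V : Type*} [Fintype V] [DecidableEq V] (w : V → V → ℝ) (B : Finset V)
    (u : {x : V // x ∉ B} → ℝ) (x : V) : ℝ :=
  if h : x ∈ B then
    (∑ y : {x : V // x ∉ B}, u y * w x y.1) / (∑ y : {x : V // x ∉ B}, w x y.1)
  else u ⟨x, h⟩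

/-- The Dirichlet Laplacian `Δ^D`. -/
def dlap {V : Type*} [Fintype V] [DecidableEq V] (m : V → ℝ) (w : V → V → ℝ) (B : Finset V)
    (u : {x : V // x ∉ B} → ℝ) (x : {x : V // x ∉ B}) : ℝ :=
  glap m w (E0 B u) x.1

/-- The Neumann Laplacian `Δ^N`. -/
def nlap {V : Type*} [Fintype V] [DecidableEq V] (m : V → ℝ) (w : V → V → ℝ) (B : Finset V)
    (u : {x : V // x ∉ B} → ℝ) (x : {x : V // x ∉ B}) : ℝ :=
  glap m w (N0 w B u) x.1

/-- The Laplacian `Δ_Ω` of the induced interior subgraph. -/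
def olap {V : Type*} [Fintype V] [DecidableEq V] (m : V → ℝ) (w : V → V → ℝ) (B : Finset V)
    (u : {x : V // x ∉ B} → ℝ) (x : {x : V // x ∉ B}) : ℝ :=
  (1 / m x.1) * ∑ y : {x : V // x ∉ B}, (u y - u x) * w x.1 y.1

/-- The weighted boundary vertex degree `Deg_b`. -/
def degb {V : Type*} [DecidableEq V] (m : V → ℝ) (w : V → V → ℝ) (B : Finset V) (x : V) : ℝ :=
  (1 / m x) * ∑ y ∈ B, w x y

/-- The operator `T = A_B ∘ Deg⁻¹ ∘ A_Ω`. -/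
def bop {V : Type*} [Fintype V] [DecidableEq V] (m : V → ℝ) (w : V → V → ℝ) (B : Finset V)
    (u : {x : V // x ∉ B} → ℝ) (z : {x : V // x ∉ B}) : ℝ :=
  (1 / m z.1) * ∑ x ∈ B, w x z.1 *
    ((∑ y : {x : V // x ∉ B}, u y * w x y.1) / (∑ y : {x : V // x ∉ B}, w x y.1))

/-- The Bakry–Émery `Γ` operator of a Laplacian-type operator `L`. -/
def gam {W : Type*} (L : (W → ℝ) → (W → ℝ)) (f g : W → ℝ) (x : W) : ℝ :=
  (L (fun y => f y * g y) x - f x * L g x - g x * L f x) / 2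

/-- The Bakry–Émery `Γ₂` operator of a Laplacian-type operator `L`. -/
def gam2 {W : Type*} (L : (W → ℝ) → (W → ℝ)) (f : W → ℝ) (x : W) : ℝ :=
  L (gam L f f) x / 2 - gam L f (L f) x

/-- `e` is a complete list of the eigenvalues of `L` : there is a corresponding eigenbasis
which is orthonormal with respect to the inner product weighted by `m`. -/
def IsEigenBasis {n : ℕ} {W : Type*} [Fintype W] (m : W → ℝ)
    (L : (W → ℝ) → (W → ℝ)) (e : Fin n → ℝ) : Prop :=
  ∃ φ : Fin n → W → ℝ,
    (∀ i j, (∑ x, φ i x * φ j x * m x) = if i = j then 1 else 0) ∧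
    ∀ i, L (φ i) = fun x => e i * φ i x

namespace MyAux

variable {W : Type*} [Fintype W]

/-- weighted inner product -/
def ip (mm : W → ℝ) (u v : W → ℝ) : ℝ := ∑ x, u x * v x * mm x

lemma ip_pos (mm : W → ℝ) (hmm : ∀ x, 0 < mm x) {v : W → ℝ} (hv : v ≠ 0) :
    0 < ip mm v v := by
  obtain ⟨x, hx⟩ := Function.ne_iff.mp hv
  refine Finset.sum_pos' (fun y _ => by nlinarith [mul_self_nonneg (v y), (hmm y).le]) ⟨x, Finset.mem_univ x, ?_⟩
  have hx' : v x ≠ 0 := hx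
  exact mul_pos (mul_self_pos.mpr hx') (hmm x)

lemma ip_sub_left (mm : W → ℝ) (f g v : W → ℝ) :
    ip mm (fun x => f x - g x) v = ip mm f v - ip mm g v := by
  simp [ip, sub_mul, Finset.sum_sub_distrib]

lemma ip_add_left (mm : W → ℝ) (f g v : W → ℝ) :
    ip mm (fun x => f x + g x) v = ip mm f v + ip mm g v := by
  simp [ip, add_mul, Finset.sum_add_distrib]

/-- bilinear form expansion against an orthonormal family -/
lemma ip_form (mm : W → ℝ) (e : Fin (Fintype.card W) → W → ℝ)
    (horth : ∀ i j, (∑ x, e i x * e j x * mm x) = if i = j then 1 else 0)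
    (a b : Fin (Fintype.card W) → ℝ) :
    ip mm (fun x => ∑ j, a j * e j x) (fun x => ∑ j, b j * e j x) = ∑ j, a j * b j := by
  classical
  unfold ip
  simp only [Finset.sum_mul, Finset.mul_sum]
  rw [Finset.sum_comm]
  refine Finset.sum_congr rfl fun k _ => ?_
  rw [Finset.sum_comm]
  have h : ∀ i, (∑ x, a i * e i x * (b k * e k x) * mm x) = if i = k then a i * b k else 0 := by
    intro i
    have : (∑ x, a i * e i x * (b k * e k x) * mm x)
        = a i * b k * ∑ x, e i x * e k x * mm x := by
      rw [Finset.mul_sum]; exact Finset.sum_congr rfl fun x _ => by ring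
    rw [this, horth i k]
    split <;> simp
  simp only [h]
  simp

def jmap (mm : W → ℝ) (f : W → ℝ) : EuclideanSpace ℝ W := WithLp.toLp 2 (fun x => f x * Real.sqrt (mm x))

open scoped RealInnerProductSpace in
lemma expansion (mm : W → ℝ) (hmm : ∀ x, 0 < mm x)
    (e : Fin (Fintype.card W) → W → ℝ)
    (horth : ∀ i j, (∑ x, e i x * e j x * mm x) = if i = j then 1 else 0)
    (v : W → ℝ) : v = fun x => ∑ j, ip mm (e j) v * e j x := by
  classical
  rcases isEmpty_or_nonempty W with hW | hW
  · funext x; exact (IsEmpty.false x).elim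
  have hn : 0 < Fintype.card W := Fintype.card_pos
  haveI : Nonempty (Fin (Fintype.card W)) := ⟨⟨0, hn⟩⟩
  let E : Fin (Fintype.card W) → EuclideanSpace ℝ W := fun j => jmap mm (e j)
  have hip : ∀ (f g : W → ℝ), ⟪jmap mm f, jmap mm g⟫ = ∑ x, f x * g x * mm x := by
    intro f g
    rw [PiLp.inner_apply]
    refine Finset.sum_congr rfl fun x _ => ?_
    have h1 : Real.sqrt (mm x) * Real.sqrt (mm x) = mm x := Real.mul_self_sqrt (hmm x).le
    simp only [RCLike.inner_apply, conj_trivial, jmap, PiLp.toLp_apply]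
    calc g x * Real.sqrt (mm x) * (f x * Real.sqrt (mm x))
        = f x * g x * (Real.sqrt (mm x) * Real.sqrt (mm x)) := by ring
      _ = f x * g x * mm x := by rw [h1]
  have hE : Orthonormal ℝ E := by
    rw [orthonormal_iff_ite]
    intro i j
    rw [show (⟪E i, E j⟫ : ℝ) = ∑ x, e i x * e j x * mm x from hip (e i) (e j), horth i j]
  have hcard : Fintype.card (Fin (Fintype.card W)) = Module.finrank ℝ (EuclideanSpace ℝ W) := by
    simp [finrank_euclideanSpace]
  let bB : Module.Basis (Fin (Fintype.card W)) ℝ (EuclideanSpace ℝ W) :=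
    basisOfOrthonormalOfCardEqFinrank hE hcard
  have hbB : ⇑bB = E := coe_basisOfOrthonormalOfCardEqFinrank hE hcard
  let b : OrthonormalBasis (Fin (Fintype.card W)) ℝ (EuclideanSpace ℝ W) :=
    bB.toOrthonormalBasis (by rwa [hbB])
  have hb : ∀ j, b j = E j := fun j => by
    simp only [b, Module.Basis.coe_toOrthonormalBasis, hbB]
  set Jv : EuclideanSpace ℝ W := jmap mm v with hJv
  have hrep := b.sum_repr' Jv
  funext x
  have hx : (∑ j, (⟪b j, Jv⟫ : ℝ) • b j : EuclideanSpace ℝ W) x = Jv x := congrArg (fun y : EuclideanSpace ℝ W => y x) hrep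
  have hsum : (∑ j, (⟪b j, Jv⟫ : ℝ) • b j : EuclideanSpace ℝ W) x
      = ∑ j, (⟪b j, Jv⟫ : ℝ) * (e j x * Real.sqrt (mm x)) := by
    rw [WithLp.ofLp_sum, Finset.sum_apply]
    refine Finset.sum_congr rfl fun j _ => ?_
    rw [hb j]
    rfl
  have hcoef : ∀ j, (⟪b j, Jv⟫ : ℝ) = ip mm (e j) v := by
    intro j
    rw [hb j]
    exact hip (e j) v
  have hxx : v x * Real.sqrt (mm x) = ∑ j, ip mm (e j) v * (e j x * Real.sqrt (mm x)) := by
    have h2 : Jv x = v x * Real.sqrt (mm x) := rfl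
    rw [← h2, ← hx, hsum]
    exact Finset.sum_congr rfl fun j _ => by rw [hcoef j]
  have hs : Real.sqrt (mm x) ≠ 0 := by
    have := Real.sqrt_pos.mpr (hmm x); linarith
  rw [show (∑ j, ip mm (e j) v * (e j x * Real.sqrt (mm x)))
      = (∑ j, ip mm (e j) v * e j x) * Real.sqrt (mm x) by
    rw [Finset.sum_mul]; exact Finset.sum_congr rfl fun j _ => by ring] at hxx
  exact mul_right_cancel₀ hs hxx


/-- `IsEigenBasis` copied locally for development (will be the real one in final file) -/

def ipL (mm : W → ℝ) (u : W → ℝ) : (W → ℝ) →ₗ[ℝ] ℝ where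
  toFun v := ip mm u v
  map_add' f g := by simp [ip, mul_add, add_mul, Finset.sum_add_distrib]
  map_smul' c f := by
    simp only [ip, Pi.smul_apply, smul_eq_mul, RingHom.id_apply, Finset.mul_sum]
    exact Finset.sum_congr rfl fun x _ => by ring

lemma map_sum_eq {L : (W → ℝ) → (W → ℝ)} (hL : IsLinearMap ℝ L) {k : ℕ}
    (c : Fin k → ℝ) (e : Fin k → W → ℝ) :
    L (fun x => ∑ j, c j * e j x) = fun x => ∑ j, c j * L (e j) x := by
  have h1 : (fun x => ∑ j, c j * e j x) = ∑ j, c j • e j := by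
    funext x; simp [Finset.sum_apply]
  have h2 : L (∑ j, c j • e j) = ∑ j, c j • L (e j) := by
    rw [show L (∑ j, c j • e j) = (hL.mk' L) (∑ j, c j • e j) from rfl,
      map_sum (hL.mk' L) (fun j => c j • e j) Finset.univ]
    refine Finset.sum_congr rfl fun j _ => ?_
    rw [map_smul]
    rfl
  rw [h1, h2]
  funext x; simp [Finset.sum_apply]

lemma eig_form (mm : W → ℝ) {L : (W → ℝ) → (W → ℝ)} (hL : IsLinearMap ℝ L)
    (e : Fin (Fintype.card W) → W → ℝ) (α : Fin (Fintype.card W) → ℝ)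
    (horth : ∀ i j, (∑ x, e i x * e j x * mm x) = if i = j then 1 else 0)
    (heig : ∀ j, L (e j) = fun x => α j * e j x)
    (c : Fin (Fintype.card W) → ℝ) :
    ip mm (L (fun x => ∑ j, c j * e j x)) (fun x => ∑ j, c j * e j x)
      = ∑ j, α j * c j ^ 2 := by
  rw [map_sum_eq hL c e]
  have h1 : (fun x => ∑ j, c j * L (e j) x) = fun x => ∑ j, (c j * α j) * e j x := by
    funext x
    refine Finset.sum_congr rfl fun j _ => ?_
    rw [heig j]
    ring
  rw [h1, ip_form mm e horth]
  exact Finset.sum_congr rfl fun j _ => by ring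


theorem weyl_aux (mm : W → ℝ) (hmm : ∀ x, 0 < mm x)
    (L1 L2 : (W → ℝ) → (W → ℝ)) (hL1 : IsLinearMap ℝ L1) (hL2 : IsLinearMap ℝ L2)
    (α β : Fin (Fintype.card W) → ℝ) (hα : Antitone α) (hβ : Antitone β)
    (h1 : IsEigenBasis mm L1 α) (h2 : IsEigenBasis mm L2 β)
    (C : ℝ) (hC : ∀ v, ip mm (L1 v) v ≤ ip mm (L2 v) v + C * ip mm v v)
    (i : Fin (Fintype.card W)) : α i ≤ β i + C := by
  classical
  obtain ⟨ψ, hψo, hψe⟩ := h1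
  obtain ⟨φ, hφo, hφe⟩ := h2
  -- construct a nonzero v orthogonal to φ j for j < i and to ψ j for j > i
  let F : (W → ℝ) →ₗ[ℝ] ({j : Fin (Fintype.card W) // j ≠ i} → ℝ) :=
    LinearMap.pi (fun j => if (j : Fin (Fintype.card W)) < i then ipL mm (φ j) else ipL mm (ψ j))
  have hdom : Module.finrank ℝ (W → ℝ) = Fintype.card W := by
    rw [Module.finrank_pi]
  have hcod : Module.finrank ℝ ({j : Fin (Fintype.card W) // j ≠ i} → ℝ) = Fintype.card W - 1 := by
    rw [Module.finrank_pi, Fintype.card_subtype_compl, Fintype.card_subtype_eq,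
      Fintype.card_fin]
  have hker : LinearMap.ker F ≠ ⊥ := by
    intro hbot
    have h3 := LinearMap.finrank_range_add_finrank_ker F
    have h4 : Module.finrank ℝ (LinearMap.range F) ≤ Fintype.card W - 1 := by
      have := Submodule.finrank_le (LinearMap.range F)
      omega
    rw [hbot, finrank_bot, hdom] at h3
    have hi := i.2
    omega
  obtain ⟨v, hvker, hv0⟩ := (Submodule.ne_bot_iff _).mp hker
  have hFv : F v = 0 := LinearMap.mem_ker.mp hvker
  set c : Fin (Fintype.card W) → ℝ := fun j => ip mm (ψ j) v with hc
  set d : Fin (Fintype.card W) → ℝ := fun j => ip mm (φ j) v with hd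
  have hcz : ∀ j, i < j → c j = 0 := by
    intro j hj
    have hne : j ≠ i := ne_of_gt hj
    have := congrFun hFv ⟨j, hne⟩
    simp [F, LinearMap.pi_apply, if_neg (not_lt.mpr hj.le), ipL, LinearMap.coe_mk,
      AddHom.coe_mk] at this
    exact this
  have hdz : ∀ j, j < i → d j = 0 := by
    intro j hj
    have hne : j ≠ i := ne_of_lt hj
    have := congrFun hFv ⟨j, hne⟩
    simp [F, LinearMap.pi_apply, if_pos hj, ipL, LinearMap.coe_mk, AddHom.coe_mk] at this
    exact this
  have hψexp : v = fun x => ∑ j, c j * ψ j x := expansion mm hmm ψ hψo v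
  have hφexp : v = fun x => ∑ j, d j * φ j x := expansion mm hmm φ hφo v
  have E1 : ip mm (L1 v) v = ∑ j, α j * c j ^ 2 := by
    conv_lhs => rw [hψexp]
    exact eig_form mm hL1 ψ α hψo hψe c
  have E2 : ip mm (L2 v) v = ∑ j, β j * d j ^ 2 := by
    conv_lhs => rw [hφexp]
    exact eig_form mm hL2 φ β hφo hφe d
  have N1 : ip mm v v = ∑ j, c j ^ 2 := by
    conv_lhs => rw [hψexp]
    rw [ip_form mm ψ hψo c c]
    exact Finset.sum_congr rfl fun j _ => (sq (c j)).symm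
  have N2 : ip mm v v = ∑ j, d j ^ 2 := by
    conv_lhs => rw [hφexp]
    rw [ip_form mm φ hφo d d]
    exact Finset.sum_congr rfl fun j _ => (sq (d j)).symm
  have A1 : α i * ip mm v v ≤ ip mm (L1 v) v := by
    rw [N1, E1, Finset.mul_sum]
    refine Finset.sum_le_sum fun j _ => ?_
    rcases le_or_gt j i with hj | hj
    · exact mul_le_mul_of_nonneg_right (hα hj) (sq_nonneg _)
    · rw [hcz j hj]
      simp
  have A2 : ip mm (L2 v) v ≤ β i * ip mm v v := by
    rw [N2, E2, Finset.mul_sum]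
    refine Finset.sum_le_sum fun j _ => ?_
    rcases lt_or_ge j i with hj | hj
    · rw [hdz j hj]
      simp
    · exact mul_le_mul_of_nonneg_right (hβ hj) (sq_nonneg _)
  have hP : 0 < ip mm v v := ip_pos mm hmm hv0
  have key : α i * ip mm v v ≤ (β i + C) * ip mm v v := by
    have h5 := hC v
    nlinarith [A1, A2]
  exact le_of_mul_le_mul_right key hP


lemma form_bounds (mm : W → ℝ) (hmm : ∀ x, 0 < mm x) {L : (W → ℝ) → (W → ℝ)}
    (hL : IsLinearMap ℝ L) (s : Fin (Fintype.card W) → ℝ) (hmono : Monotone s)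
    (hs : IsEigenBasis mm L s) (h0 : 0 < Fintype.card W) (v : W → ℝ) :
    s ⟨0, h0⟩ * ip mm v v ≤ ip mm (L v) v ∧
      ip mm (L v) v ≤ s ⟨Fintype.card W - 1, by omega⟩ * ip mm v v := by
  obtain ⟨χ, hχo, hχe⟩ := hs
  set t : Fin (Fintype.card W) → ℝ := fun j => ip mm (χ j) v with ht
  have hexp : v = fun x => ∑ j, t j * χ j x := expansion mm hmm χ hχo v
  have E : ip mm (L v) v = ∑ j, s j * t j ^ 2 := by
    conv_lhs => rw [hexp]
    exact eig_form mm hL χ s hχo hχe t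
  have N : ip mm v v = ∑ j, t j ^ 2 := by
    conv_lhs => rw [hexp]
    rw [ip_form mm χ hχo t t]
    exact Finset.sum_congr rfl fun j _ => (sq (t j)).symm
  constructor
  · rw [E, N, Finset.mul_sum]
    refine Finset.sum_le_sum fun j _ => ?_
    exact mul_le_mul_of_nonneg_right (hmono (by simp [Fin.le_def])) (sq_nonneg _)
  · rw [E, N, Finset.mul_sum]
    refine Finset.sum_le_sum fun j _ => ?_
    refine mul_le_mul_of_nonneg_right (hmono ?_) (sq_nonneg _)
    have := j.2
    simp only [Fin.le_def]
    omega


section Concrete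

variable {V : Type*} [Fintype V] [DecidableEq V] (m : V → ℝ) (w : V → V → ℝ) (B : Finset V)

lemma glap_add (f g : V → ℝ) (x : V) :
    glap m w (fun y => f y + g y) x = glap m w f x + glap m w g x := by
  simp only [glap]
  rw [← mul_add, ← Finset.sum_add_distrib]
  congr 1
  exact Finset.sum_congr rfl fun y _ => by ring

lemma glap_smul (c : ℝ) (f : V → ℝ) (x : V) :
    glap m w (fun y => c * f y) x = c * glap m w f x := by
  simp only [glap]
  rw [show (∑ y, (c * f y - c * f x) * w x y) = c * ∑ y, (f y - f x) * w x y by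
    rw [Finset.mul_sum]; exact Finset.sum_congr rfl fun y _ => by ring]
  ring

lemma E0_add (u v : {x : V // x ∉ B} → ℝ) :
    E0 B (u + v) = fun y => E0 B u y + E0 B v y := by
  funext y
  simp only [E0]
  split <;> simp

lemma E0_smul (c : ℝ) (u : {x : V // x ∉ B} → ℝ) :
    E0 B (c • u) = fun y => c * E0 B u y := by
  funext y
  simp only [E0]
  split <;> simp

lemma N0_add (u v : {x : V // x ∉ B} → ℝ) :
    N0 w B (u + v) = fun y => N0 w B u y + N0 w B v y := by
  funext y
  simp only [N0]
  split
  · rw [← add_div, ← Finset.sum_add_distrib]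
    congr 1
    exact Finset.sum_congr rfl fun z _ => by simp [add_mul]
  · simp

lemma N0_smul (c : ℝ) (u : {x : V // x ∉ B} → ℝ) :
    N0 w B (c • u) = fun y => c * N0 w B u y := by
  funext y
  simp only [N0]
  split
  · simp only [Pi.smul_apply, smul_eq_mul]
    rw [show (∑ z : {x : V // x ∉ B}, c * u z * w y z.1)
        = c * ∑ z : {x : V // x ∉ B}, u z * w y z.1 by
      rw [Finset.mul_sum]; exact Finset.sum_congr rfl fun z _ => by ring, mul_div_assoc]
  · simp

lemma dlap_linear : IsLinearMap ℝ (dlap m w B) := by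
  constructor
  · intro u v
    funext x
    simp only [dlap, Pi.add_apply]
    rw [E0_add, glap_add]
  · intro c u
    funext x
    simp only [dlap, Pi.smul_apply, smul_eq_mul]
    rw [E0_smul, glap_smul]

lemma nlap_linear : IsLinearMap ℝ (nlap m w B) := by
  constructor
  · intro u v
    funext x
    simp only [nlap, Pi.add_apply]
    rw [N0_add, glap_add]
  · intro c u
    funext x
    simp only [nlap, Pi.smul_apply, smul_eq_mul]
    rw [N0_smul, glap_smul]

lemma bop_linear : IsLinearMap ℝ (bop m w B) := by
  constructor
  · intro u v
    funext z
    simp only [bop, Pi.add_apply]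
    rw [← mul_add, ← Finset.sum_add_distrib]
    congr 1
    refine Finset.sum_congr rfl fun x _ => ?_
    rw [← mul_add, ← add_div, ← Finset.sum_add_distrib]
    congr 2
    exact Finset.sum_congr rfl fun y _ => by ring
  · intro c u
    funext z
    simp only [bop, Pi.smul_apply, smul_eq_mul]
    rw [show (∑ x ∈ B, w x z.1 * ((∑ y : {x : V // x ∉ B}, c * u y * w x y.1) /
          (∑ y : {x : V // x ∉ B}, w x y.1)))
        = c * ∑ x ∈ B, w x z.1 * ((∑ y : {x : V // x ∉ B}, u y * w x y.1) /
          (∑ y : {x : V // x ∉ B}, w x y.1)) by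
      rw [Finset.mul_sum]
      refine Finset.sum_congr rfl fun x _ => ?_
      rw [show (∑ y : {x : V // x ∉ B}, c * u y * w x y.1)
          = c * ∑ y : {x : V // x ∉ B}, u y * w x y.1 by
        rw [Finset.mul_sum]; exact Finset.sum_congr rfl fun y _ => by ring]
      ring]
    ring

lemma key_identity (hwsymm : ∀ x y, w x y = w y x) (u : {x : V // x ∉ B} → ℝ)
    (x : {x : V // x ∉ B}) :
    dlap m w B u x = nlap m w B u x - bop m w B u x := by
  have hNx : N0 w B u x.1 = u x := dif_neg x.2
  have hEx : E0 B u x.1 = u x := dif_neg x.2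
  have hdiff : nlap m w B u x - dlap m w B u x
      = (1 / m x.1) * ∑ y, (N0 w B u y - E0 B u y) * w x.1 y := by
    simp only [nlap, dlap, glap]
    rw [← mul_sub, ← Finset.sum_sub_distrib]
    congr 1
    refine Finset.sum_congr rfl fun y _ => ?_
    rw [hNx, hEx]
    ring
  have hsum : (∑ y, (N0 w B u y - E0 B u y) * w x.1 y)
      = ∑ y ∈ B, (N0 w B u y - E0 B u y) * w x.1 y := by
    symm
    refine Finset.sum_subset (Finset.subset_univ B) fun y _ hy => ?_
    have h1 : N0 w B u y = u ⟨y, hy⟩ := dif_neg hy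
    have h2 : E0 B u y = u ⟨y, hy⟩ := dif_neg hy
    rw [h1, h2]
    ring
  have hB : (∑ y ∈ B, (N0 w B u y - E0 B u y) * w x.1 y)
      = ∑ y ∈ B, w y x.1 *
          ((∑ z : {x : V // x ∉ B}, u z * w y z.1) / (∑ z : {x : V // x ∉ B}, w y z.1)) := by
    refine Finset.sum_congr rfl fun y hy => ?_
    rw [show N0 w B u y = (∑ z : {x : V // x ∉ B}, u z * w y z.1) /
          (∑ z : {x : V // x ∉ B}, w y z.1) from dif_pos hy,
      show E0 B u y = 0 from dif_pos hy, hwsymm x.1 y]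
    ring
  have : nlap m w B u x - dlap m w B u x = bop m w B u x := by
    rw [hdiff, hsum, hB]
    rfl
  linarith

end Concrete

end MyAux

theorem stmt_10' {V : Type*} [Fintype V] [DecidableEq V]
    (m : V → ℝ) (hm : ∀ x, 0 < m x)
    (w : V → V → ℝ) (hwsymm : ∀ x y, w x y = w y x)
    (B : Finset V)
    (ν : Fin (Fintype.card {x : V // x ∉ B}) → ℝ) (hνmono : Monotone ν)
    (hν : IsEigenBasis (fun x : {x : V // x ∉ B} => m x.1) (nlap m w B) (fun i => -(ν i)))
    (lam : Fin (Fintype.card {x : V // x ∉ B}) → ℝ) (hlammono : Monotone lam)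
    (hlam : IsEigenBasis (fun x : {x : V // x ∉ B} => m x.1) (dlap m w B) (fun i => -(lam i)))
    (sq : Fin (Fintype.card {x : V // x ∉ B}) → ℝ) (hsqmono : Monotone sq)
    (hsq : IsEigenBasis (fun x : {x : V // x ∉ B} => m x.1) (bop m w B) sq)
    (i : Fin (Fintype.card {x : V // x ∉ B})) (h0 : 0 < Fintype.card {x : V // x ∉ B})
    (h1 : Fintype.card {x : V // x ∉ B} - 1 < Fintype.card {x : V // x ∉ B}) :
    ν i + sq ⟨0, h0⟩ ≤ lam i ∧ lam i ≤ ν i + sq ⟨Fintype.card {x : V // x ∉ B} - 1, h1⟩ := by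
  set mm : {x : V // x ∉ B} → ℝ := fun x => m x.1 with hmmdef
  have hmm : ∀ x : {x : V // x ∉ B}, 0 < mm x := fun x => hm x.1
  have hdl := MyAux.dlap_linear m w B
  have hnl := MyAux.nlap_linear m w B
  have hbl := MyAux.bop_linear m w B
  have hid : ∀ u (x : {x : V // x ∉ B}),
      dlap m w B u x = nlap m w B u x - bop m w B u x :=
    fun u x => MyAux.key_identity m w B hwsymm u x
  have hfb := fun v => MyAux.form_bounds mm hmm hbl sq hsqmono hsq h0 v
  have hα : Antitone (fun j => -(lam j)) := fun a b h => neg_le_neg (hlammono h)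
  have hβ : Antitone (fun j => -(ν j)) := fun a b h => neg_le_neg (hνmono h)
  constructor
  · have hC : ∀ v, MyAux.ip mm (dlap m w B v) v
        ≤ MyAux.ip mm (nlap m w B v) v + (-(sq ⟨0, h0⟩)) * MyAux.ip mm v v := by
      intro v
      have hsub : MyAux.ip mm (dlap m w B v) v
          = MyAux.ip mm (nlap m w B v) v - MyAux.ip mm (bop m w B v) v := by
        rw [show dlap m w B v = fun x => nlap m w B v x - bop m w B v x from
          funext (hid v), MyAux.ip_sub_left]
      have hb1 := (hfb v).1
      have hneg : (-(sq ⟨0, h0⟩)) * MyAux.ip mm v v = -(sq ⟨0, h0⟩ * MyAux.ip mm v v) :=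
        neg_mul _ _
      linarith
    have := MyAux.weyl_aux mm hmm (dlap m w B) (nlap m w B) hdl hnl
      (fun j => -(lam j)) (fun j => -(ν j)) hα hβ hlam hν (-(sq ⟨0, h0⟩)) hC i
    linarith
  · have hC : ∀ v, MyAux.ip mm (nlap m w B v) v
        ≤ MyAux.ip mm (dlap m w B v) v + (sq ⟨Fintype.card {x : V // x ∉ B} - 1, h1⟩) *
          MyAux.ip mm v v := by
      intro v
      have hsub : MyAux.ip mm (dlap m w B v) v
          = MyAux.ip mm (nlap m w B v) v - MyAux.ip mm (bop m w B v) v := by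
        rw [show dlap m w B v = fun x => nlap m w B v x - bop m w B v x from
          funext (hid v), MyAux.ip_sub_left]
      have hb2 := (hfb v).2
      linarith
    have := MyAux.weyl_aux mm hmm (nlap m w B) (dlap m w B) hnl hdl
      (fun j => -(ν j)) (fun j => -(lam j)) hβ hα hν hlam
      (sq ⟨Fintype.card {x : V // x ∉ B} - 1, h1⟩) hC i
    linarith

theorem stmt_10 {V : Type*} [Fintype V] [DecidableEq V]
    (G : SimpleGraph V) (hconn : G.Connected)
    (m : V → ℝ) (hm : ∀ x, 0 < m x)
    (w : V → V → ℝ) (hwsymm : ∀ x y, w x y = w y x)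
    (hwpos : ∀ x y, G.Adj x y → 0 < w x y)
    (hw0 : ∀ x y, ¬ G.Adj x y → w x y = 0)
    (B : Finset V) (hB : B.Nonempty)
    (hBB : ∀ x ∈ B, ∀ y ∈ B, ¬ G.Adj x y)
    (hBint : ∀ x ∈ B, ∃ y, y ∉ B ∧ G.Adj x y)
    (ν : Fin (Fintype.card {x : V // x ∉ B}) → ℝ) (hνmono : Monotone ν)
    (hν : IsEigenBasis (fun x : {x : V // x ∉ B} => m x.1) (nlap m w B) (fun i => -(ν i)))
    (lam : Fin (Fintype.card {x : V // x ∉ B}) → ℝ) (hlammono : Monotone lam)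
    (hlam : IsEigenBasis (fun x : {x : V // x ∉ B} => m x.1) (dlap m w B) (fun i => -(lam i)))
    (sq : Fin (Fintype.card {x : V // x ∉ B}) → ℝ) (hsqmono : Monotone sq)
    (hsq : IsEigenBasis (fun x : {x : V // x ∉ B} => m x.1) (bop m w B) sq)
    :
    ∀ i : Fin (Fintype.card {x : V // x ∉ B}),
      ν i + sq ⟨0, (by obtain ⟨x0, hx0⟩ := hB; obtain ⟨y0, hy0, -⟩ := hBint x0 hx0; exact Fintype.card_pos_iff.mpr ⟨⟨y0, hy0⟩⟩)⟩ ≤ lam i ∧ lam i ≤ ν i + sq ⟨Fintype.card {x : V // x ∉ B} - 1, (by obtain ⟨x0, hx0⟩ := hB; obtain ⟨y0, hy0, -⟩ := hBint x0 hx0; have h0 : 0 < Fintype.card {x : V // x ∉ B} := Fintype.card_pos_iff.mpr ⟨⟨y0, hy0⟩⟩; omega)⟩ := by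
  intro i
  have h0 : 0 < Fintype.card {x : V // x ∉ B} := i.pos
  exact stmt_10' m hm w hwsymm B ν hνmono hν lam hlammono hlam sq hsqmono hsq i h0 (by omega)
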